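/- arXiv:1708.09122 — 4 statements merged into one kernel-verified Lean document; each statement's English description precedes it below -/
import Mathlib

section
/- In the Task Scheduling Game, when a player i adds a single task k ∉ s_i to his strategy (keeping others' strategies fixed), the change in his payoff equals the change in the potential function Φ, and both equal V_k/(M_k(s)+1) − (c_i(s_i ∪ {k}) − c_i(s_i)), where M_k(s) is the number of players selecting k before the change. -/
/-- Number of players choosing task `k` under profile `s`. -/
def Mk {ι σ : Type*} [Fintype ι] [DecidableEq σ] (s : ι → Finset σ) (k : σ) : ℕ :=
  (Finset.univ.filter (fun i => k ∈ s i)).card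

/-- Payoff of player `i` in the Task Scheduling Game. -/
noncomputable def payoff {ι σ : Type*} [Fintype ι] [DecidableEq σ] (V : σ → ℝ)
    (c : ι → Finset σ → ℝ) (i : ι) (s : ι → Finset σ) : ℝ :=
  (∑ k ∈ s i, V k / (Mk s k : ℝ)) - c i (s i)

/-- Potential function of the Task Scheduling Game. -/
noncomputable def potential {ι σ : Type*} [Fintype ι] [Fintype σ] [DecidableEq σ]
    (V : σ → ℝ) (c : ι → Finset σ → ℝ) (s : ι → Finset σ) : ℝ :=
  (∑ k : σ, ∑ m ∈ Finset.Icc 1 (Mk s k), V k / (m : ℝ)) - ∑ i : ι, c i (s i)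

lemma Mk_update_ne {ι σ : Type*} [Fintype ι] [DecidableEq ι] [DecidableEq σ]
    (s : ι → Finset σ) (i : ι) (k j : σ) (hj : j ≠ k) :
    Mk (Function.update s i (insert k (s i))) j = Mk s j := by
  unfold Mk
  congr 1
  apply Finset.filter_congr
  intro x _
  rcases eq_or_ne x i with rfl | h
  · simp [Function.update_self, hj]
  · simp [Function.update_of_ne h]

lemma Mk_update_self {ι σ : Type*} [Fintype ι] [DecidableEq ι] [DecidableEq σ]
    (s : ι → Finset σ) (i : ι) (k : σ) (hk : k ∉ s i) :
    Mk (Function.update s i (insert k (s i))) k = Mk s k + 1 := by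
  unfold Mk
  have : (Finset.univ.filter (fun x => k ∈ Function.update s i (insert k (s i)) x))
      = insert i (Finset.univ.filter (fun x => k ∈ s x)) := by
    ext x
    rcases eq_or_ne x i with rfl | h
    · simp [Function.update_self]
    · simp [Function.update_of_ne h, h]
  rw [this, Finset.card_insert_of_notMem (by simp [hk])]

theorem stmt_2 {ι σ : Type*} [Fintype ι] [DecidableEq ι] [Fintype σ] [DecidableEq σ]
    (V : σ → ℝ) (hV : ∀ k, 0 ≤ V k) (c : ι → Finset σ → ℝ)
    (i : ι) (s : ι → Finset σ) (k : σ) (hk : k ∉ s i) :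
    payoff V c i (Function.update s i (insert k (s i))) - payoff V c i s =
      V k / ((Mk s k : ℝ) + 1) - (c i (insert k (s i)) - c i (s i)) ∧
    potential V c (Function.update s i (insert k (s i))) - potential V c s =
      V k / ((Mk s k : ℝ) + 1) - (c i (insert k (s i)) - c i (s i)) := by
  set s' := Function.update s i (insert k (s i)) with hs'
  have hsi : s' i = insert k (s i) := Function.update_self _ _ _
  constructor
  · unfold payoff
    rw [hsi, Finset.sum_insert hk]
    have hsum : ∑ j ∈ s i, V j / (Mk s' j : ℝ) = ∑ j ∈ s i, V j / (Mk s j : ℝ) := by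
      apply Finset.sum_congr rfl
      intro j hj
      rw [Mk_update_ne s i k j (fun h => hk (h ▸ hj))]
    rw [hsum, Mk_update_self s i k hk]
    push_cast
    ring
  · unfold potential
    have hcost : ∑ j : ι, c j (s' j) = c i (insert k (s i)) - c i (s i) + ∑ j : ι, c j (s j) := by
      rw [← Finset.add_sum_erase _ (fun j => c j (s' j)) (Finset.mem_univ i),
          ← Finset.add_sum_erase _ (fun j => c j (s j)) (Finset.mem_univ i), hsi]
      have : ∀ j ∈ Finset.univ.erase i, c j (s' j) = c j (s j) := by
        intro j hj
        rw [hs', Function.update_of_ne (Finset.mem_erase.1 hj).1]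
      rw [Finset.sum_congr rfl this]
      ring
    have hpot : ∑ j : σ, ∑ m ∈ Finset.Icc 1 (Mk s' j), V j / (m : ℝ)
        = V k / ((Mk s k : ℝ) + 1) + ∑ j : σ, ∑ m ∈ Finset.Icc 1 (Mk s j), V j / (m : ℝ) := by
      rw [← Finset.add_sum_erase _ _ (Finset.mem_univ k),
          ← Finset.add_sum_erase _ (fun j => ∑ m ∈ Finset.Icc 1 (Mk s j), V j / (m : ℝ)) (Finset.mem_univ k)]
      have h1 : ∀ j ∈ Finset.univ.erase k, ∑ m ∈ Finset.Icc 1 (Mk s' j), V j / (m : ℝ)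
          = ∑ m ∈ Finset.Icc 1 (Mk s j), V j / (m : ℝ) := by
        intro j hj
        rw [Mk_update_ne s i k j (Finset.mem_erase.1 hj).1]
      rw [Finset.sum_congr rfl h1, Mk_update_self s i k hk]
      have : Finset.Icc 1 (Mk s k + 1) = insert (Mk s k + 1) (Finset.Icc 1 (Mk s k)) := by
        ext m; simp [Finset.mem_Icc]; omega
      rw [this, Finset.sum_insert (by simp)]
      push_cast
      ring
    rw [hcost, hpot]
    ring
end

section
/- Every finite exact potential game possesses at least one Nash equilibrium (in pure strategies). -/
theorem stmt_4 {ι : Type*} [Fintype ι] [DecidableEq ι] {σ : ι → Type*}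
    [∀ i, Fintype (σ i)] [∀ i, Nonempty (σ i)]
    (u : ι → (∀ i, σ i) → ℝ) (Φ : (∀ i, σ i) → ℝ)
    (hΦ : ∀ (i : ι) (s : ∀ j, σ j) (si si' : σ i),
      u i (Function.update s i si) - u i (Function.update s i si') =
        Φ (Function.update s i si) - Φ (Function.update s i si')) :
    ∃ sstar : ∀ i, σ i, ∀ (i : ι) (si' : σ i),
      u i (Function.update sstar i si') ≤ u i sstar := by
  obtain ⟨sstar, hmax⟩ := Finset.exists_max_image Finset.univ Φ ⟨Classical.arbitrary _, Finset.mem_univ _⟩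
  refine ⟨sstar, fun i si' => ?_⟩
  have h := hΦ i sstar si' (sstar i)
  rw [Function.update_eq_self] at h
  have hle := hmax.2 (Function.update sstar i si') (Finset.mem_univ _)
  linarith
end

section
/- Let Φ(s) = ∑_{k∈S} ∑_{m=1}^{M_k(s)} V_k/m − ∑_i c_i(s_i) and W(s) = ∑_{k∈S} V_k·1_{M_k(s)≥1} − ∑_i c_i(s_i) with all V_k ≥ 0 and H_N = ∑_{m=1}^N 1/m the N-th harmonic number, where N = |N| is the number of players. Then for every strategy profile s, Φ(s) ≤ H_N · ∑_{k∈S} V_k·1_{M_k(s)≥1} − ∑_i c_i(s_i); in particular if all costs are zero, Φ(s) ≤ H_N · W(s). -/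
/-- Social welfare of the Task Scheduling Game. -/
noncomputable def welfare {ι σ : Type*} [Fintype ι] [Fintype σ] [DecidableEq σ]
    (V : σ → ℝ) (c : ι → Finset σ → ℝ) (s : ι → Finset σ) : ℝ :=
  (∑ k : σ, if 1 ≤ Mk s k then V k else 0) - ∑ i : ι, c i (s i)


theorem stmt_11 {ι σ : Type*} [Fintype ι] [Fintype σ] [DecidableEq σ]
    (V : σ → ℝ) (hV : ∀ k, 0 ≤ V k) (c : ι → Finset σ → ℝ) (s : ι → Finset σ) :
    potential V c s ≤
      (∑ m ∈ Finset.Icc 1 (Fintype.card ι), (1 : ℝ) / m) *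
        (∑ k : σ, if 1 ≤ Mk s k then V k else 0) - ∑ i : ι, c i (s i) ∧
    ((∀ (i : ι) (t : Finset σ), c i t = 0) →
      potential V c s ≤
        (∑ m ∈ Finset.Icc 1 (Fintype.card ι), (1 : ℝ) / m) * welfare V c s) := by
  have hHnonneg : 0 ≤ ∑ m ∈ Finset.Icc 1 (Fintype.card ι), (1 : ℝ) / m := by
    apply Finset.sum_nonneg
    intro m hm
    positivity
  have key : (∑ k : σ, ∑ m ∈ Finset.Icc 1 (Mk s k), V k / (m : ℝ)) ≤
      (∑ m ∈ Finset.Icc 1 (Fintype.card ι), (1 : ℝ) / m) *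
        (∑ k : σ, if 1 ≤ Mk s k then V k else 0) := by
    rw [Finset.mul_sum]
    apply Finset.sum_le_sum
    intro k _
    by_cases h : 1 ≤ Mk s k
    · simp only [h, if_true]
      have hsub : Finset.Icc 1 (Mk s k) ⊆ Finset.Icc 1 (Fintype.card ι) := by
        apply Finset.Icc_subset_Icc_right
        exact le_trans (Finset.card_filter_le _ _) Finset.card_univ.le
      calc ∑ m ∈ Finset.Icc 1 (Mk s k), V k / (m : ℝ)
          ≤ ∑ m ∈ Finset.Icc 1 (Fintype.card ι), V k / (m : ℝ) := by
            apply Finset.sum_le_sum_of_subset_of_nonneg hsub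
            intro m _ _
            exact div_nonneg (hV k) (Nat.cast_nonneg m)
        _ = (∑ m ∈ Finset.Icc 1 (Fintype.card ι), (1 : ℝ) / m) * V k := by
            rw [Finset.sum_mul]
            congr 1; ext m; ring
    · simp only [h, if_false, mul_zero]
      have : Mk s k = 0 := by omega
      simp [this]
  constructor
  · unfold potential
    linarith
  · intro hc
    unfold potential welfare
    simp only [hc]
    simp only [Finset.sum_const_zero, sub_zero]
    linarith
end

section
/- In the Task Scheduling Game with zero costs (c_i ≡ 0 for all i), the price of anarchy of the potential-maximizing Nash equilibrium is at most H_N: if s* maximizes the potential Φ and s° maximizes the social welfare W, then W(s°) ≤ H_N · W(s*), where H_N = ∑_{m=1}^N 1/m. -/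
theorem stmt_12 {ι σ : Type*} [Fintype ι] [Fintype σ] [DecidableEq σ]
    (V : σ → ℝ) (hV : ∀ k, 0 ≤ V k) (c : ι → Finset σ → ℝ)
    (hc : ∀ (i : ι) (t : Finset σ), c i t = 0)
    (sstar scirc : ι → Finset σ)
    (hstar : ∀ s : ι → Finset σ, potential V c s ≤ potential V c sstar)
    (hcirc : ∀ s : ι → Finset σ, welfare V c s ≤ welfare V c scirc) :
    welfare V c scirc ≤
      (∑ m ∈ Finset.Icc 1 (Fintype.card ι), (1 : ℝ) / m) * welfare V c sstar := by
  have hMk : ∀ (s : ι → Finset σ) k, Mk s k ≤ Fintype.card ι := fun s k =>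
    (Finset.card_filter_le _ _).trans_eq (by simp)
  -- W(s) ≤ Φ(s)
  have hWP : ∀ s : ι → Finset σ, welfare V c s ≤ potential V c s := by
    intro s
    simp only [welfare, potential, hc, Finset.sum_const_zero, sub_zero]
    refine Finset.sum_le_sum fun k _ => ?_
    by_cases h : 1 ≤ Mk s k
    · simp only [if_pos h]
      calc V k = ∑ m ∈ Finset.Icc (1:ℕ) 1, V k / (m : ℝ) := by norm_num
        _ ≤ _ := Finset.sum_le_sum_of_subset_of_nonneg
            (Finset.Icc_subset_Icc_right h)
            (fun m hm _ => div_nonneg (hV k) (by positivity))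
    · simp only [if_neg h]
      exact Finset.sum_nonneg fun m hm => div_nonneg (hV k) (by positivity)
  -- Φ(s) ≤ H_N * W(s)
  have hPW : potential V c sstar ≤
      (∑ m ∈ Finset.Icc 1 (Fintype.card ι), (1 : ℝ) / m) * welfare V c sstar := by
    simp only [welfare, potential, hc, Finset.sum_const_zero, sub_zero,
      Finset.mul_sum]
    refine Finset.sum_le_sum fun k _ => ?_
    by_cases h : 1 ≤ Mk sstar k
    · simp only [if_pos h]
      calc ∑ m ∈ Finset.Icc 1 (Mk sstar k), V k / (m : ℝ)
          ≤ ∑ m ∈ Finset.Icc 1 (Fintype.card ι), V k / (m : ℝ) :=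
            Finset.sum_le_sum_of_subset_of_nonneg
              (Finset.Icc_subset_Icc_right (hMk sstar k))
              (fun m hm _ => div_nonneg (hV k) (by positivity))
        _ = (∑ m ∈ Finset.Icc 1 (Fintype.card ι), (1 : ℝ) / m) * V k := by
            rw [Finset.sum_mul]; refine Finset.sum_congr rfl fun m hm => ?_; ring
    · have : Mk sstar k = 0 := by omega
      simp [this, if_neg h]
  calc welfare V c scirc ≤ potential V c scirc := hWP scirc
    _ ≤ potential V c sstar := hstar scirc
    _ ≤ _ := hPW
end
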